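/- Let n ≥ 3 and let T ⊆ {1,…,n} be nonempty with T ∩ {n−1, n} = ∅ (so T ⊆ {1,…,n−2}). If |T| is odd, the geometric realization of the induced subcomplex K''_{χ'',T} is homotopy equivalent to the sphere S^{|T|}. If |T| is even, the geometric realization of K''_{χ'',T} is homotopy equivalent to the sphere S^{|T|−1}. -/

import Mathlib

/-- The `(i,j)` entry of the characteristic matrix `χ''` of the small cover over
`P₆ × I^{n−2}` (rows `1,…,n`, columns `1,…,2n+2`): row `i` has `1`'s exactly at positions
`i`, `n+1`, `n+1+i` and `2n+2`. -/
def chi''Entry (n i j : ℕ) : ZMod 2 :=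
  if j = i ∨ j = n + 1 ∨ j = n + 1 + i ∨ j = 2 * n + 2 then 1 else 0

/-- The support of `χ''_T = ∑_{i∈T} (row i of χ'')`, as a subset of `{1,…,2n+2}`. -/
def chi''Supp (n : ℕ) (T : Finset ℕ) : Finset ℕ :=
  (Finset.Icc 1 (2 * n + 2)).filter (fun j => (∑ i ∈ T, chi''Entry n i j) ≠ 0)

/-- The vertex set of the 6-cycle `C₆`, in cyclic order `n+1, n−1, n, 2n+2, 2n, 2n+1`. -/
def hexCyc (n : ℕ) : Finset ℕ := {n + 1, n - 1, n, 2 * n + 2, 2 * n, 2 * n + 1}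

/-- The edges of the 6-cycle `C₆` with vertices `n+1, n−1, n, 2n+2, 2n, 2n+1` in cyclic
order. -/
def hexEdges (n : ℕ) : Finset (Finset ℕ) :=
  {{n + 1, n - 1}, {n - 1, n}, {n, 2 * n + 2}, {2 * n + 2, 2 * n}, {2 * n, 2 * n + 1},
   {2 * n + 1, n + 1}}

/-- Faces of `K''`, the simplicial join of the 6-cycle `C₆` (on vertices
`n+1, n−1, n, 2n+2, 2n, 2n+1`) with the boundary complex of the `(n−2)`-dimensional cross
polytope on `{1,…,n−2} ∪ {n+2,…,2n−1}` with antipodal pairs `{i, n+1+i}` (`1 ≤ i ≤ n−2`):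
`t` is a face iff its intersection with the cycle is a face of the cycle (empty, a vertex,
or an edge) and it contains no antipodal pair. -/
def hexFace (n : ℕ) (t : Finset ℕ) : Prop :=
  t ⊆ Finset.Icc 1 (2 * n + 2) ∧
  (∀ i ∈ Finset.Icc 1 (n - 2), ¬(i ∈ t ∧ n + 1 + i ∈ t)) ∧
  (t ∩ hexCyc n = ∅ ∨ (∃ a ∈ hexCyc n, t ∩ hexCyc n = {a}) ∨ t ∩ hexCyc n ∈ hexEdges n)

/-- The geometric realization of an abstract simplicial complex with vertices among
`{0,…,m−1}`, whose faces are given by the predicate `K`: the space of convex weight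
functions whose support is a face of `K`. -/
abbrev GeomReal (m : ℕ) (K : Finset ℕ → Prop) : Type :=
  {f : Fin m → ℝ // (∀ v, 0 ≤ f v) ∧ (∑ v, f v = 1) ∧
    K ((Finset.univ.filter (fun v => f v ≠ 0)).image Fin.val)}

noncomputable section AuxTopology

lemma subcomplex_max_add_max_neg (a : ℝ) : max a 0 + max (-a) 0 = |a| := by
  rcases le_total 0 a with h | h
  · rw [max_eq_left h, max_eq_right (by linarith), abs_of_nonneg h, add_zero]
  · rw [max_eq_right h, max_eq_left (by linarith), abs_of_nonpos h, zero_add]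

/-- Subtype homeomorphism from a pointwise iff. -/
def subtypeHomeoOfIff {X : Type*} [TopologicalSpace X] {p q : X → Prop}
    (h : ∀ x, p x ↔ q x) : {x // p x} ≃ₜ {x // q x} :=
  (Homeomorph.refl X).subtype (by simpa using h)

lemma subcomplex_sum_abs_ne_zero {k : ℕ} {y : EuclideanSpace ℝ (Fin k)} (hy : y ≠ 0) :
    (∑ i, |y i|) ≠ 0 := by
  intro h0
  apply hy
  ext i
  have hnn : ∀ j ∈ Finset.univ, (0:ℝ) ≤ |y j| := fun j _ => abs_nonneg _
  have := (Finset.sum_eq_zero_iff_of_nonneg hnn).mp h0 i (Finset.mem_univ i)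
  simpa using abs_eq_zero.mp this

lemma subcomplex_l1_ne_zero {k : ℕ} {x : EuclideanSpace ℝ (Fin k)} (h : ∑ i, |x i| = 1) :
    x ≠ 0 := by
  intro h0
  rw [h0] at h
  simp at h

/-- The ℓ¹ unit sphere in `ℝ^k` is homeomorphic to the Euclidean unit sphere. -/
def l1SphereHomeo (k : ℕ) :
    {x : EuclideanSpace ℝ (Fin k) // ∑ i, |x i| = 1} ≃ₜ
      Metric.sphere (0 : EuclideanSpace ℝ (Fin k)) 1 where
  toFun x := ⟨‖x.1‖⁻¹ • x.1, by
    have hx : x.1 ≠ 0 := subcomplex_l1_ne_zero x.2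
    simp [mem_sphere_zero_iff_norm, norm_smul, abs_of_nonneg, inv_mul_cancel₀,
      norm_ne_zero_iff.2 hx]⟩
  invFun y := ⟨(∑ i, |y.1 i|)⁻¹ • y.1, by
    have hy : (y.1 : EuclideanSpace ℝ (Fin k)) ≠ 0 := by
      have := mem_sphere_zero_iff_norm.mp y.2
      intro h0; rw [h0] at this; simp at this
    have hs : (∑ i, |y.1 i|) ≠ 0 := subcomplex_sum_abs_ne_zero hy
    have hpos : 0 < ∑ i, |y.1 i| := by
      rcases (Finset.sum_nonneg (fun j _ => abs_nonneg (y.1 j))).lt_or_eq with h | h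
      · exact h
      · exact absurd h.symm hs
    calc ∑ i, |((∑ i, |y.1 i|)⁻¹ • y.1) i| = ∑ i, (∑ i, |y.1 i|)⁻¹ * |y.1 i| := by
          apply Finset.sum_congr rfl
          intro i _
          rw [PiLp.smul_apply, smul_eq_mul, abs_mul, abs_of_pos (inv_pos.2 hpos)]
      _ = 1 := by rw [← Finset.mul_sum, inv_mul_cancel₀ hs]⟩
  left_inv x := by
    ext1
    have hx : x.1 ≠ 0 := subcomplex_l1_ne_zero x.2
    have hn : ‖x.1‖ ≠ 0 := norm_ne_zero_iff.2 hx
    have h1 : ∑ i, |(‖x.1‖⁻¹ • x.1) i| = ‖x.1‖⁻¹ := by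
      calc ∑ i, |(‖x.1‖⁻¹ • x.1) i| = ∑ i, ‖x.1‖⁻¹ * |x.1 i| := by
            apply Finset.sum_congr rfl
            intro i _
            rw [PiLp.smul_apply, smul_eq_mul, abs_mul,
              abs_of_nonneg (inv_nonneg.2 (norm_nonneg _))]
        _ = ‖x.1‖⁻¹ := by rw [← Finset.mul_sum, x.2, mul_one]
    simp only [h1, smul_smul, inv_inv]
    rw [mul_inv_cancel₀ hn, one_smul]
  right_inv y := by
    ext1
    have hy : (y.1 : EuclideanSpace ℝ (Fin k)) ≠ 0 := by
      have := mem_sphere_zero_iff_norm.mp y.2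
      intro h0; rw [h0] at this; simp at this
    have hn1 : ‖(y.1 : EuclideanSpace ℝ (Fin k))‖ = 1 := mem_sphere_zero_iff_norm.mp y.2
    have hs : (∑ i, |y.1 i|) ≠ 0 := subcomplex_sum_abs_ne_zero hy
    have hpos : 0 ≤ (∑ i, |y.1 i|)⁻¹ :=
      inv_nonneg.2 (Finset.sum_nonneg (fun j _ => abs_nonneg _))
    simp only []
    rw [norm_smul]
    simp only [Real.norm_eq_abs, abs_of_nonneg hpos, hn1, mul_one, smul_smul, inv_inv]
    rw [mul_inv_cancel₀ hs, one_smul]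
  continuous_toFun := by
    apply Continuous.subtype_mk
    apply Continuous.fun_smul
    · apply Continuous.inv₀
      · exact continuous_norm.comp continuous_subtype_val
      · intro x; exact norm_ne_zero_iff.2 (subcomplex_l1_ne_zero x.2)
    · exact continuous_subtype_val
  continuous_invFun := by
    apply Continuous.subtype_mk
    apply Continuous.fun_smul
    · apply Continuous.inv₀
      · apply continuous_finset_sum
        intro i _
        exact (continuous_abs.comp ((EuclideanSpace.proj i).continuous.comp
          continuous_subtype_val))
      · intro y
        apply subcomplex_sum_abs_ne_zero
        have := mem_sphere_zero_iff_norm.mp y.2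
        intro h0; rw [h0] at this; simp at this
    · exact continuous_subtype_val

section Cross

variable {m k : ℕ} (P N : Fin k → Fin m)

/-- Inverse of the coordinates-of-the-cross-polytope map. -/
def crossInv (x : Fin k → ℝ) : Fin m → ℝ := fun v =>
  ∑ j, ((if v = P j then max (x j) 0 else 0) + (if v = N j then max (-x j) 0 else 0))

lemma crossInv_applyP (hPP : Function.Injective P) (hPN : ∀ j j', P j ≠ N j')
    (x : Fin k → ℝ) (j0 : Fin k) : crossInv P N x (P j0) = max (x j0) 0 := by
  unfold crossInv
  have h : ∀ j ∈ Finset.univ, ((if P j0 = P j then max (x j) 0 else 0) +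
      (if P j0 = N j then max (-x j) 0 else 0)) = if j = j0 then max (x j0) 0 else 0 := by
    intro j _
    by_cases h : j = j0
    · subst h
      rw [if_pos rfl, if_neg (hPN j j), if_pos rfl, add_zero]
    · have h1 : P j0 ≠ P j := fun he => h (hPP he).symm
      rw [if_neg h1, if_neg (hPN j0 j), if_neg h, add_zero]
  rw [Finset.sum_congr rfl h, Finset.sum_ite_eq' Finset.univ j0 (fun _ => max (x j0) 0)]
  simp

lemma crossInv_applyN (hNN : Function.Injective N) (hPN : ∀ j j', P j ≠ N j')
    (x : Fin k → ℝ) (j0 : Fin k) : crossInv P N x (N j0) = max (-x j0) 0 := by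
  unfold crossInv
  have h : ∀ j ∈ Finset.univ, ((if N j0 = P j then max (x j) 0 else 0) +
      (if N j0 = N j then max (-x j) 0 else 0)) = if j = j0 then max (-x j0) 0 else 0 := by
    intro j _
    by_cases h : j = j0
    · subst h
      rw [if_neg (fun he => hPN j j he.symm), if_pos rfl, if_pos rfl, zero_add]
    · have h1 : N j0 ≠ N j := fun he => h (hNN he).symm
      rw [if_neg (fun he => hPN j j0 he.symm), if_neg h1, if_neg h, add_zero]
  rw [Finset.sum_congr rfl h, Finset.sum_ite_eq' Finset.univ j0 (fun _ => max (-x j0) 0)]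
  simp

lemma crossInv_applyOther (x : Fin k → ℝ) (v : Fin m) (hv : ¬ ∃ j, v = P j ∨ v = N j) :
    crossInv P N x v = 0 := by
  unfold crossInv
  apply Finset.sum_eq_zero
  intro j _
  have h1 : v ≠ P j := fun h => hv ⟨j, Or.inl h⟩
  have h2 : v ≠ N j := fun h => hv ⟨j, Or.inr h⟩
  rw [if_neg h1, if_neg h2, add_zero]

/-- The realization of the boundary complex of a cross polytope (with antipodal pairs
`P j, N j`) is homeomorphic to the ℓ¹ unit sphere. -/
def crossHomeo (hPP : Function.Injective P) (hNN : Function.Injective N)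
    (hPN : ∀ j j', P j ≠ N j') :
    {f : Fin m → ℝ // (∀ v, 0 ≤ f v) ∧ (∑ v, f v = 1) ∧
      (∀ v, f v ≠ 0 → ∃ j, v = P j ∨ v = N j) ∧ (∀ j, f (P j) = 0 ∨ f (N j) = 0)} ≃ₜ
    {x : EuclideanSpace ℝ (Fin k) // ∑ i, |x i| = 1} where
  toFun f := ⟨WithLp.toLp 2 (fun j => f.1 (P j) - f.1 (N j)), by
    obtain ⟨hnn, hsum, hsupp, hpair⟩ := f.2
    have h1 : ∀ j ∈ Finset.univ, |f.1 (P j) - f.1 (N j)| = f.1 (P j) + f.1 (N j) := by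
      intro j _
      rcases hpair j with h | h
      · rw [h, zero_sub, abs_neg, abs_of_nonneg (hnn _), zero_add]
      · rw [h, sub_zero, abs_of_nonneg (hnn _), add_zero]
    have hdisj : Disjoint (Finset.univ.image P) (Finset.univ.image N) := by
      rw [Finset.disjoint_left]
      rintro a ha hb
      obtain ⟨j, _, rfl⟩ := Finset.mem_image.mp ha
      obtain ⟨j', _, he⟩ := Finset.mem_image.mp hb
      exact hPN j j' he.symm
    have hzero : ∀ v ∈ Finset.univ,
        v ∉ Finset.univ.image P ∪ Finset.univ.image N → f.1 v = 0 := by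
      intro v _ hv
      by_contra h0
      obtain ⟨j, hj | hj⟩ := hsupp v h0
      · exact hv (Finset.mem_union.mpr (Or.inl
          (Finset.mem_image.mpr ⟨j, Finset.mem_univ j, hj.symm⟩)))
      · exact hv (Finset.mem_union.mpr (Or.inr
          (Finset.mem_image.mpr ⟨j, Finset.mem_univ j, hj.symm⟩)))
    calc ∑ j, |f.1 (P j) - f.1 (N j)| = ∑ j, (f.1 (P j) + f.1 (N j)) :=
          Finset.sum_congr rfl h1
      _ = ∑ j, f.1 (P j) + ∑ j, f.1 (N j) := Finset.sum_add_distrib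
      _ = ∑ v ∈ Finset.univ.image P, f.1 v + ∑ v ∈ Finset.univ.image N, f.1 v := by
          rw [Finset.sum_image (fun a _ b _ h => hPP h),
            Finset.sum_image (fun a _ b _ h => hNN h)]
      _ = ∑ v ∈ Finset.univ.image P ∪ Finset.univ.image N, f.1 v :=
          (Finset.sum_union hdisj).symm
      _ = ∑ v, f.1 v := Finset.sum_subset (Finset.subset_univ _) hzero
      _ = 1 := hsum⟩
  invFun x := ⟨crossInv P N x.1, by
    refine ⟨?_, ?_, ?_, ?_⟩
    · intro v
      apply Finset.sum_nonneg
      intro j _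
      apply add_nonneg <;> split_ifs <;> simp [le_max_right]
    · show (∑ v, ∑ j, ((if v = P j then max (x.1 j) 0 else 0) +
        (if v = N j then max (-x.1 j) 0 else 0))) = 1
      rw [Finset.sum_comm]
      have h1 : ∀ j ∈ Finset.univ, (∑ v, ((if v = P j then max (x.1 j) 0 else 0) +
          (if v = N j then max (-x.1 j) 0 else 0))) = |x.1 j| := by
        intro j _
        rw [Finset.sum_add_distrib, Finset.sum_ite_eq' Finset.univ (P j),
          Finset.sum_ite_eq' Finset.univ (N j)]
        simp [subcomplex_max_add_max_neg]
      rw [Finset.sum_congr rfl h1, x.2]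
    · intro v hv
      by_contra h0
      exact hv (crossInv_applyOther P N x.1 v h0)
    · intro j
      rw [crossInv_applyP P N hPP hPN, crossInv_applyN P N hNN hPN]
      rcases le_total (x.1 j) 0 with h | h
      · left; exact max_eq_right h
      · right; exact max_eq_right (by linarith)⟩
  left_inv f := by
    ext v
    obtain ⟨hnn, hsum, hsupp, hpair⟩ := f.2
    show crossInv P N (fun j => f.1 (P j) - f.1 (N j)) v = f.1 v
    by_cases hv : ∃ j, v = P j ∨ v = N j
    · obtain ⟨j, rfl | rfl⟩ := hv
      · rw [crossInv_applyP P N hPP hPN]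
        rcases hpair j with h | h
        · rw [h, zero_sub]
          exact max_eq_right (by simpa using hnn (N j))
        · rw [h, sub_zero]
          exact max_eq_left (hnn _)
      · rw [crossInv_applyN P N hNN hPN]
        rcases hpair j with h | h
        · rw [h, zero_sub, neg_neg]
          exact max_eq_left (hnn _)
        · rw [h, sub_zero]
          exact max_eq_right (by simpa using hnn (P j))
    · rw [crossInv_applyOther P N _ v hv]
      by_contra h0
      exact hv (hsupp v (fun he => h0 he.symm))
  right_inv x := by
    ext j
    show crossInv P N x.1 (P j) - crossInv P N x.1 (N j) = x.1 j
    rw [crossInv_applyP P N hPP hPN, crossInv_applyN P N hNN hPN]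
    rcases le_total (x.1 j) 0 with h | h
    · rw [max_eq_right h, max_eq_left (by linarith)]; ring
    · rw [max_eq_left h, max_eq_right (by linarith)]; ring
  continuous_toFun := by
    apply Continuous.subtype_mk
    apply (PiLp.continuous_toLp 2 _).comp
    apply continuous_pi
    intro j
    exact ((continuous_apply (P j)).comp continuous_subtype_val).sub
      ((continuous_apply (N j)).comp continuous_subtype_val)
  continuous_invFun := by
    apply Continuous.subtype_mk
    apply continuous_pi
    intro v
    apply continuous_finset_sum
    intro j _
    apply Continuous.add <;> split_ifs <;>
      first
        | exact ((((EuclideanSpace.proj (𝕜 := ℝ) j).continuous).comp continuous_subtype_val).max continuous_const)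
        | exact ((((EuclideanSpace.proj (𝕜 := ℝ) j).continuous).comp continuous_subtype_val).neg.max continuous_const)
        | exact continuous_const

end Cross

/-- Assembly: if the face predicate of a complex is exactly "subset of the pairs
`σP j, σN j` containing no full pair", then its realization is homotopy equivalent to the
`(k−1)`-sphere. -/
lemma subcomplex_assemble (m k : ℕ) (σP σN : Fin k → ℕ) (hPm : ∀ j, σP j < m)
    (hNm : ∀ j, σN j < m)
    (hPP : ∀ j j', σP j = σP j' → j = j') (hNN : ∀ j j', σN j = σN j' → j = j')
    (hPN : ∀ j j', σP j ≠ σN j') (K : Finset ℕ → Prop)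
    (hK : ∀ t : Finset ℕ, K t ↔
      ((∀ v ∈ t, ∃ j, v = σP j ∨ v = σN j) ∧ (∀ j, ¬(σP j ∈ t ∧ σN j ∈ t)))) :
    Nonempty (ContinuousMap.HomotopyEquiv (GeomReal m K)
      (Metric.sphere (0 : EuclideanSpace ℝ (Fin k)) 1)) := by
  set P : Fin k → Fin m := fun j => ⟨σP j, hPm j⟩ with hP
  set N : Fin k → Fin m := fun j => ⟨σN j, hNm j⟩ with hN
  have hPP' : Function.Injective P := fun j j' h => hPP j j' (congrArg Fin.val h)
  have hNN' : Function.Injective N := fun j j' h => hNN j j' (congrArg Fin.val h)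
  have hPN' : ∀ j j', P j ≠ N j' := fun j j' h => hPN j j' (congrArg Fin.val h)
  have key : ∀ f : Fin m → ℝ,
      ((∀ v, 0 ≤ f v) ∧ (∑ v, f v = 1) ∧
        K ((Finset.univ.filter (fun v => f v ≠ 0)).image Fin.val)) ↔
      ((∀ v, 0 ≤ f v) ∧ (∑ v, f v = 1) ∧
        (∀ v, f v ≠ 0 → ∃ j, v = P j ∨ v = N j) ∧ (∀ j, f (P j) = 0 ∨ f (N j) = 0)) := by
    intro f
    apply and_congr_right; intro _
    apply and_congr_right; intro _
    set t := (Finset.univ.filter (fun v => f v ≠ 0)).image Fin.val with ht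
    have hmem : ∀ v : ℕ, v ∈ t ↔ ∃ w : Fin m, f w ≠ 0 ∧ (w : ℕ) = v := by
      intro v
      simp [ht, Finset.mem_image, Finset.mem_filter]
    rw [hK t]
    constructor
    · rintro ⟨hA, hB⟩
      constructor
      · intro w hw
        obtain ⟨j, hj | hj⟩ := hA (w : ℕ) ((hmem _).mpr ⟨w, hw, rfl⟩)
        · exact ⟨j, Or.inl (Fin.ext hj)⟩
        · exact ⟨j, Or.inr (Fin.ext hj)⟩
      · intro j
        by_contra h
        push_neg at h
        exact hB j ⟨(hmem _).mpr ⟨P j, h.1, rfl⟩, (hmem _).mpr ⟨N j, h.2, rfl⟩⟩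
    · rintro ⟨hA, hB⟩
      constructor
      · intro v hv
        obtain ⟨w, hw, rfl⟩ := (hmem v).mp hv
        obtain ⟨j, rfl | rfl⟩ := hA w hw
        · exact ⟨j, Or.inl rfl⟩
        · exact ⟨j, Or.inr rfl⟩
      · rintro j ⟨hp, hq⟩
        obtain ⟨w1, hw1, he1⟩ := (hmem _).mp hp
        obtain ⟨w2, hw2, he2⟩ := (hmem _).mp hq
        have hw1' : w1 = P j := Fin.ext he1
        have hw2' : w2 = N j := Fin.ext he2
        rcases hB j with h | h
        · exact hw1 (hw1' ▸ h)
        · exact hw2 (hw2' ▸ h)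
  exact ⟨(((subtypeHomeoOfIff key).trans (crossHomeo P N hPP' hNN' hPN')).trans
    (l1SphereHomeo k)).toHomotopyEquiv⟩

end AuxTopology

section AuxCombinatorics

lemma supp_mem (n : ℕ) (hn : 3 ≤ n) (T : Finset ℕ) (hsub : T ⊆ Finset.Icc 1 (n - 2))
    (v : ℕ) :
    v ∈ chi''Supp n T ↔
      (v ∈ T ∨ (∃ i ∈ T, v = n + 1 + i) ∨ ((v = n + 1 ∨ v = 2 * n + 2) ∧ ¬ Even T.card)) := by
  have hTb : ∀ i ∈ T, 1 ≤ i ∧ i ≤ n - 2 := by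
    intro i hi
    exact Finset.mem_Icc.mp (hsub hi)
  rw [chi''Supp, Finset.mem_filter, Finset.mem_Icc]
  by_cases hv : v = n + 1 ∨ v = 2 * n + 2
  · have hsum : (∑ i ∈ T, chi''Entry n i v) = (T.card : ZMod 2) := by
      rw [Finset.sum_congr rfl (fun i _ => ?_), Finset.sum_const, nsmul_eq_mul, mul_one]
      unfold chi''Entry
      rcases hv with h | h
      · rw [if_pos (Or.inr (Or.inl h))]
      · rw [if_pos (Or.inr (Or.inr (Or.inr h)))]
    rw [hsum]
    have hcard : ((T.card : ZMod 2) ≠ 0) ↔ ¬ Even T.card := by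
      rw [Ne, ZMod.natCast_eq_zero_iff]
      exact not_congr (Iff.symm even_iff_two_dvd)
    constructor
    · rintro ⟨_, hne⟩
      exact Or.inr (Or.inr ⟨hv, hcard.mp hne⟩)
    · rintro (h | ⟨i, hi, rfl⟩ | ⟨_, hne⟩)
      · have := hTb _ h; omega
      · have := hTb _ hi; omega
      · exact ⟨by omega, hcard.mpr hne⟩
  · push_neg at hv
    obtain ⟨hv1, hv2⟩ := hv
    have hentry : ∀ i ∈ T, chi''Entry n i v =
        (if v = i then 1 else 0) + (if v = n + 1 + i then (1 : ZMod 2) else 0) := by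
      intro i hi
      have := hTb i hi
      unfold chi''Entry
      by_cases h1 : v = i <;> by_cases h2 : v = n + 1 + i
      · omega
      · simp [h1, h2]
      · simp [h1, h2, hv1, hv2]
      · simp [h1, h2, hv1, hv2]
    rw [Finset.sum_congr rfl hentry, Finset.sum_add_distrib]
    have hfirst : (∑ i ∈ T, if v = i then (1 : ZMod 2) else 0) =
        if v ∈ T then 1 else 0 := by
      exact Finset.sum_ite_eq T v (fun _ => 1)
    have hsecond : (∑ i ∈ T, if v = n + 1 + i then (1 : ZMod 2) else 0) =
        if ∃ i ∈ T, v = n + 1 + i then 1 else 0 := by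
      by_cases hex : ∃ i ∈ T, v = n + 1 + i
      · obtain ⟨i0, hi0, he⟩ := hex
        rw [if_pos ⟨i0, hi0, he⟩]
        rw [Finset.sum_eq_single_of_mem i0 hi0 (fun i _ hne => if_neg (by omega))]
        exact if_pos he
      · rw [if_neg hex]
        exact Finset.sum_eq_zero (fun i hi => if_neg (fun h => hex ⟨i, hi, h⟩))
    rw [hfirst, hsecond]
    constructor
    · rintro ⟨_, hne⟩
      by_cases h1 : v ∈ T
      · exact Or.inl h1
      · by_cases h2 : ∃ i ∈ T, v = n + 1 + i
        · exact Or.inr (Or.inl h2)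
        · simp [h1, h2] at hne
    · rintro (h | h | ⟨h, _⟩)
      · have := hTb v h
        have hne : ¬ ∃ i ∈ T, v = n + 1 + i := by
          rintro ⟨i, hi, rfl⟩
          have := hTb _ hi
          omega
        refine ⟨by omega, ?_⟩
        rw [if_pos h, if_neg hne, add_zero]
        exact one_ne_zero
      · obtain ⟨i, hi, rfl⟩ := h
        have := hTb i hi
        have hne : n + 1 + i ∉ T := fun hmem => by have := hTb _ hmem; omega
        refine ⟨by omega, ?_⟩
        rw [if_neg hne, if_pos ⟨i, hi, rfl⟩, zero_add]
        exact one_ne_zero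
      · omega

lemma mem_hexCyc (n v : ℕ) : v ∈ hexCyc n ↔
    (v = n + 1 ∨ v = n - 1 ∨ v = n ∨ v = 2 * n + 2 ∨ v = 2 * n ∨ v = 2 * n + 1) := by
  simp [hexCyc]

lemma face_iff_odd (n : ℕ) (hn : 3 ≤ n) (T : Finset ℕ) (hsub : T ⊆ Finset.Icc 1 (n - 2))
    (hodd : ¬ Even T.card) (t : Finset ℕ) :
    (hexFace n t ∧ t ⊆ chi''Supp n T) ↔
      ((∀ v ∈ t, v ∈ T ∨ (∃ i ∈ T, v = n + 1 + i) ∨ v = n + 1 ∨ v = 2 * n + 2) ∧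
       (∀ i ∈ T, ¬(i ∈ t ∧ n + 1 + i ∈ t)) ∧ ¬(n + 1 ∈ t ∧ 2 * n + 2 ∈ t)) := by
  have hTb : ∀ i ∈ T, 1 ≤ i ∧ i ≤ n - 2 := fun i hi => Finset.mem_Icc.mp (hsub hi)
  constructor
  · rintro ⟨⟨hIcc, hanti, hcyc⟩, hsupp⟩
    have hmem : ∀ v ∈ t, v ∈ T ∨ (∃ i ∈ T, v = n + 1 + i) ∨ v = n + 1 ∨ v = 2 * n + 2 := by
      intro v hv
      rcases (supp_mem n hn T hsub v).mp (hsupp hv) with h | h | ⟨h, _⟩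
      · exact Or.inl h
      · exact Or.inr (Or.inl h)
      · exact Or.inr (Or.inr h)
    refine ⟨hmem, fun i hi => hanti i (hsub hi), ?_⟩
    rintro ⟨ha, hb⟩
    have hint : t ∩ hexCyc n = {n + 1, 2 * n + 2} := by
      ext v
      simp only [Finset.mem_inter, mem_hexCyc, Finset.mem_insert, Finset.mem_singleton]
      constructor
      · rintro ⟨hvt, hvc⟩
        rcases hmem v hvt with h | ⟨i, hi, rfl⟩ | h | h
        · have := hTb v h; omega
        · have := hTb i hi; omega
        · exact Or.inl h
        · exact Or.inr h
      · rintro (rfl | rfl)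
        · exact ⟨ha, Or.inl rfl⟩
        · exact ⟨hb, by omega⟩
    rw [hint] at hcyc
    rcases hcyc with h | ⟨a, _, h⟩ | h
    · have : n + 1 ∈ ({n + 1, 2 * n + 2} : Finset ℕ) := by simp
      rw [h] at this; simp at this
    · have h1 : n + 1 ∈ ({a} : Finset ℕ) := by rw [← h]; simp
      have h2 : 2 * n + 2 ∈ ({a} : Finset ℕ) := by rw [← h]; simp
      simp only [Finset.mem_singleton] at h1 h2
      omega
    · simp only [hexEdges, Finset.mem_insert, Finset.mem_singleton] at h
      have h1 : n + 1 ∈ ({n + 1, 2 * n + 2} : Finset ℕ) := by simp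
      have h2 : 2 * n + 2 ∈ ({n + 1, 2 * n + 2} : Finset ℕ) := by simp
      rcases h with h | h | h | h | h | h <;> rw [h] at h1 h2 <;>
        simp only [Finset.mem_insert, Finset.mem_singleton] at h1 h2 <;> omega
  · rintro ⟨hmem, hanti, hnot⟩
    have hsupp : t ⊆ chi''Supp n T := by
      intro v hv
      rw [supp_mem n hn T hsub v]
      rcases hmem v hv with h | h | h | h
      · exact Or.inl h
      · exact Or.inr (Or.inl h)
      · exact Or.inr (Or.inr ⟨Or.inl h, hodd⟩)
      · exact Or.inr (Or.inr ⟨Or.inr h, hodd⟩)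
    have hintsub : ∀ v ∈ t, v ∈ hexCyc n → (v = n + 1 ∨ v = 2 * n + 2) := by
      intro v hvt hvc
      rw [mem_hexCyc] at hvc
      rcases hmem v hvt with h | ⟨i, hi, rfl⟩ | h | h
      · have := hTb v h; omega
      · have := hTb i hi; omega
      · exact Or.inl h
      · exact Or.inr h
    refine ⟨⟨?_, ?_, ?_⟩, hsupp⟩
    · intro v hv
      rw [Finset.mem_Icc]
      rcases hmem v hv with h | ⟨i, hi, rfl⟩ | h | h
      · have := hTb v h; omega
      · have := hTb i hi; omega
      · omega
      · omega
    · intro i hi ⟨hit, hit2⟩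
      rw [Finset.mem_Icc] at hi
      have hiT : i ∈ T := by
        rcases hmem i hit with h | ⟨i', hi', rfl⟩ | h | h
        · exact h
        · have := hTb i' hi'; omega
        · omega
        · omega
      exact hanti i hiT ⟨hit, hit2⟩
    · by_cases ha : n + 1 ∈ t <;> by_cases hb : 2 * n + 2 ∈ t
      · exact absurd ⟨ha, hb⟩ hnot
      · refine Or.inr (Or.inl ⟨n + 1, by rw [mem_hexCyc]; omega, ?_⟩)
        ext v
        simp only [Finset.mem_inter, Finset.mem_singleton]
        constructor
        · rintro ⟨hvt, hvc⟩
          rcases hintsub v hvt hvc with h | h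
          · exact h
          · exact absurd (h ▸ hvt) hb
        · rintro rfl
          exact ⟨ha, by rw [mem_hexCyc]; omega⟩
      · refine Or.inr (Or.inl ⟨2 * n + 2, by rw [mem_hexCyc]; omega, ?_⟩)
        ext v
        simp only [Finset.mem_inter, Finset.mem_singleton]
        constructor
        · rintro ⟨hvt, hvc⟩
          rcases hintsub v hvt hvc with h | h
          · exact absurd (h ▸ hvt) ha
          · exact h
        · rintro rfl
          exact ⟨hb, by rw [mem_hexCyc]; omega⟩
      · refine Or.inl ?_
        ext v
        simp only [Finset.mem_inter, Finset.notMem_empty, iff_false, not_and]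
        intro hvt hvc
        rcases hintsub v hvt hvc with h | h
        · exact ha (h ▸ hvt)
        · exact hb (h ▸ hvt)

lemma face_iff_even (n : ℕ) (hn : 3 ≤ n) (T : Finset ℕ) (hsub : T ⊆ Finset.Icc 1 (n - 2))
    (heven : Even T.card) (t : Finset ℕ) :
    (hexFace n t ∧ t ⊆ chi''Supp n T) ↔
      ((∀ v ∈ t, v ∈ T ∨ (∃ i ∈ T, v = n + 1 + i)) ∧
       (∀ i ∈ T, ¬(i ∈ t ∧ n + 1 + i ∈ t))) := by
  have hTb : ∀ i ∈ T, 1 ≤ i ∧ i ≤ n - 2 := fun i hi => Finset.mem_Icc.mp (hsub hi)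
  constructor
  · rintro ⟨⟨hIcc, hanti, hcyc⟩, hsupp⟩
    refine ⟨?_, fun i hi => hanti i (hsub hi)⟩
    intro v hv
    rcases (supp_mem n hn T hsub v).mp (hsupp hv) with h | h | ⟨_, h⟩
    · exact Or.inl h
    · exact Or.inr h
    · exact absurd heven h
  · rintro ⟨hmem, hanti⟩
    have hsupp : t ⊆ chi''Supp n T := by
      intro v hv
      rw [supp_mem n hn T hsub v]
      rcases hmem v hv with h | h
      · exact Or.inl h
      · exact Or.inr (Or.inl h)
    refine ⟨⟨?_, ?_, ?_⟩, hsupp⟩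
    · intro v hv
      rw [Finset.mem_Icc]
      rcases hmem v hv with h | ⟨i, hi, rfl⟩
      · have := hTb v h; omega
      · have := hTb i hi; omega
    · intro i hi ⟨hit, hit2⟩
      rw [Finset.mem_Icc] at hi
      have hiT : i ∈ T := by
        rcases hmem i hit with h | ⟨i', hi', rfl⟩
        · exact h
        · have := hTb i' hi'; omega
      exact hanti i hiT ⟨hit, hit2⟩
    · refine Or.inl ?_
      ext v
      simp only [Finset.mem_inter, Finset.notMem_empty, iff_false, not_and]
      intro hvt hvc
      rw [mem_hexCyc] at hvc
      rcases hmem v hvt with h | ⟨i, hi, rfl⟩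
      · have := hTb v h; omega
      · have := hTb i hi; omega

end AuxCombinatorics

/-- Let `n ≥ 3` and let `T ⊆ {1,…,n}` be nonempty with
`T ∩ {n−1, n} = ∅` (so `T ⊆ {1,…,n−2}`). If `|T|` is odd, the realization of the induced
subcomplex `K''_{χ'',T}` is homotopy equivalent to `S^{|T|}`; if `|T|` is even, it is
homotopy equivalent to `S^{|T|−1}`. -/
theorem geomReal_hex_subcomplex_neither (n : ℕ) (hn : 3 ≤ n) (T : Finset ℕ)
    (hT : T ⊆ Finset.Icc 1 n) (hne : T.Nonempty) (h1 : n - 1 ∉ T) (h2 : n ∉ T) :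
    (¬ Even T.card →
      Nonempty (ContinuousMap.HomotopyEquiv
        (GeomReal (2 * n + 3) (fun t => hexFace n t ∧ t ⊆ chi''Supp n T))
        (Metric.sphere (0 : EuclideanSpace ℝ (Fin (T.card + 1))) 1))) ∧
    (Even T.card →
      Nonempty (ContinuousMap.HomotopyEquiv
        (GeomReal (2 * n + 3) (fun t => hexFace n t ∧ t ⊆ chi''Supp n T))
        (Metric.sphere (0 : EuclideanSpace ℝ (Fin T.card)) 1))) := by
  have hsub : T ⊆ Finset.Icc 1 (n - 2) := by
    intro i hi
    have hb := Finset.mem_Icc.mp (hT hi)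
    have e1 : i ≠ n - 1 := fun e => h1 (e ▸ hi)
    have e2 : i ≠ n := fun e => h2 (e ▸ hi)
    rw [Finset.mem_Icc]
    omega
  have hTb : ∀ i ∈ T, 1 ≤ i ∧ i ≤ n - 2 := fun i hi => Finset.mem_Icc.mp (hsub hi)
  set k := T.card with hk
  set σ : Fin k → ℕ := fun j => ((T.equivFin.symm j : T) : ℕ) with hσ
  have hσT : ∀ j, σ j ∈ T := fun j => (T.equivFin.symm j).2
  have hσinj : ∀ j j', σ j = σ j' → j = j' :=
    fun j j' h => T.equivFin.symm.injective (Subtype.ext h)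
  have hσsurj : ∀ i ∈ T, ∃ j, σ j = i := by
    intro i hi
    refine ⟨T.equivFin ⟨i, hi⟩, ?_⟩
    simp [hσ]
  have hσb : ∀ j, 1 ≤ σ j ∧ σ j ≤ n - 2 := fun j => hTb _ (hσT j)
  constructor
  · -- odd case
    intro hodd
    set σP : Fin (k + 1) → ℕ :=
      fun j => if h : (j : ℕ) < k then σ ⟨j, h⟩ else n + 1 with hσP
    set σN : Fin (k + 1) → ℕ :=
      fun j => if h : (j : ℕ) < k then n + 1 + σ ⟨j, h⟩ else 2 * n + 2 with hσN
    have hPlt : ∀ (j : Fin (k + 1)) (h : (j : ℕ) < k), σP j = σ ⟨j, h⟩ :=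
      fun j h => dif_pos h
    have hNlt : ∀ (j : Fin (k + 1)) (h : (j : ℕ) < k), σN j = n + 1 + σ ⟨j, h⟩ :=
      fun j h => dif_pos h
    have hPge : ∀ (j : Fin (k + 1)), ¬((j : ℕ) < k) → σP j = n + 1 :=
      fun j h => dif_neg h
    have hNge : ∀ (j : Fin (k + 1)), ¬((j : ℕ) < k) → σN j = 2 * n + 2 :=
      fun j h => dif_neg h
    apply subcomplex_assemble (2 * n + 3) (k + 1) σP σN
    · intro j
      by_cases h : (j : ℕ) < k
      · rw [hPlt j h]; have := hσb ⟨j, h⟩; omega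
      · rw [hPge j h]; omega
    · intro j
      by_cases h : (j : ℕ) < k
      · rw [hNlt j h]; have := hσb ⟨j, h⟩; omega
      · rw [hNge j h]; omega
    · intro j j' he
      by_cases h : (j : ℕ) < k <;> by_cases h' : (j' : ℕ) < k
      · rw [hPlt j h, hPlt j' h'] at he
        have h2 := hσinj _ _ he
        have h3 := congrArg Fin.val h2
        exact Fin.ext h3
      · rw [hPlt j h, hPge j' h'] at he
        have := hσb ⟨j, h⟩; omega
      · rw [hPge j h, hPlt j' h'] at he
        have := hσb ⟨j', h'⟩; omega
      · have hj := j.isLt; have hj' := j'.isLt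
        exact Fin.ext (by omega)
    · intro j j' he
      by_cases h : (j : ℕ) < k <;> by_cases h' : (j' : ℕ) < k
      · rw [hNlt j h, hNlt j' h'] at he
        have he' : σ ⟨j, h⟩ = σ ⟨j', h'⟩ := by omega
        have h2 := hσinj _ _ he'
        have h3 := congrArg Fin.val h2
        exact Fin.ext h3
      · rw [hNlt j h, hNge j' h'] at he
        have := hσb ⟨j, h⟩; omega
      · rw [hNge j h, hNlt j' h'] at he
        have := hσb ⟨j', h'⟩; omega
      · have hj := j.isLt; have hj' := j'.isLt
        exact Fin.ext (by omega)
    · intro j j' he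
      by_cases h : (j : ℕ) < k <;> by_cases h' : (j' : ℕ) < k
      · rw [hPlt j h, hNlt j' h'] at he
        have := hσb ⟨j, h⟩; have := hσb ⟨j', h'⟩; omega
      · rw [hPlt j h, hNge j' h'] at he
        have := hσb ⟨j, h⟩; omega
      · rw [hPge j h, hNlt j' h'] at he
        have := hσb ⟨j', h'⟩; omega
      · rw [hPge j h, hNge j' h'] at he
        omega
    · intro t
      rw [face_iff_odd n hn T hsub hodd t]
      constructor
      · rintro ⟨hA, hB, hC⟩
        constructor
        · intro v hv
          rcases hA v hv with h | ⟨i, hi, rfl⟩ | h | h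
          · obtain ⟨j0, hj0⟩ := hσsurj v h
            refine ⟨Fin.castSucc j0, Or.inl ?_⟩
            rw [hPlt _ (by simpa using j0.isLt)]
            rw [← hj0]
            congr 1
          · obtain ⟨j0, hj0⟩ := hσsurj i hi
            refine ⟨Fin.castSucc j0, Or.inr ?_⟩
            rw [hNlt _ (by simpa using j0.isLt)]
            rw [← hj0]
            congr 2
          · exact ⟨Fin.last k, Or.inl (by rw [hPge _ (by simp)]; exact h)⟩
          · exact ⟨Fin.last k, Or.inr (by rw [hNge _ (by simp)]; exact h)⟩
        · intro j
          by_cases h : (j : ℕ) < k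
          · rw [hPlt j h, hNlt j h]
            exact hB _ (hσT ⟨j, h⟩)
          · rw [hPge j h, hNge j h]
            exact hC
      · rintro ⟨hA, hB⟩
        refine ⟨?_, ?_, ?_⟩
        · intro v hv
          obtain ⟨j, rfl | rfl⟩ := hA v hv
          · by_cases h : (j : ℕ) < k
            · rw [hPlt j h]; exact Or.inl (hσT _)
            · rw [hPge j h]; exact Or.inr (Or.inr (Or.inl rfl))
          · by_cases h : (j : ℕ) < k
            · rw [hNlt j h]; exact Or.inr (Or.inl ⟨σ ⟨j, h⟩, hσT _, rfl⟩)
            · rw [hNge j h]; exact Or.inr (Or.inr (Or.inr rfl))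
        · intro i hi
          obtain ⟨j0, hj0⟩ := hσsurj i hi
          have hcast : ((Fin.castSucc j0 : Fin (k + 1)) : ℕ) < k := by
            simpa using j0.isLt
          have hp : σP (Fin.castSucc j0) = i := by
            rw [hPlt _ hcast, ← hj0]
            congr 1
          have hq : σN (Fin.castSucc j0) = n + 1 + i := by
            rw [hNlt _ hcast, ← hj0]
            congr 2
          have := hB (Fin.castSucc j0)
          rw [hp, hq] at this
          exact this
        · have := hB (Fin.last k)
          rw [hPge _ (by simp), hNge _ (by simp)] at this
          exact this
  · -- even case
    intro heven
    apply subcomplex_assemble (2 * n + 3) k σ (fun j => n + 1 + σ j)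
    · intro j; have := hσb j; omega
    · intro j; have := hσb j; omega
    · exact hσinj
    · intro j j' he; exact hσinj j j' (by omega)
    · intro j j'; have := hσb j; have := hσb j'; omega
    · intro t
      rw [face_iff_even n hn T hsub heven t]
      constructor
      · rintro ⟨hA, hB⟩
        constructor
        · intro v hv
          rcases hA v hv with h | ⟨i, hi, rfl⟩
          · obtain ⟨j0, hj0⟩ := hσsurj v h
            exact ⟨j0, Or.inl hj0.symm⟩
          · obtain ⟨j0, hj0⟩ := hσsurj i hi
            exact ⟨j0, Or.inr (by rw [hj0])⟩
        · intro j
          exact hB _ (hσT j)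
      · rintro ⟨hA, hB⟩
        constructor
        · intro v hv
          obtain ⟨j, rfl | rfl⟩ := hA v hv
          · exact Or.inl (hσT _)
          · exact Or.inr ⟨σ j, hσT _, rfl⟩
        · intro i hi
          obtain ⟨j0, hj0⟩ := hσsurj i hi
          have := hB j0
          rw [hj0] at this
          exact this
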